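/- arXiv:2302.07031 — 2 statements merged into one kernel-verified Lean document; each statement's English description precedes it below -/
import Mathlib

section
/- Uniqueness part of Theorem 1: let u ∈ ℝ³ with u ≠ 0. If f₁, f₂ ∈ ℝ³ satisfy the static load balance equations f₁ + f₂ = m_L·g·e₃ and b₁·(u × f₁) − b₂·(u × f₂) = 0, then there exists a unique t ∈ ℝ such that f₁ = (b₂·m_L·g/L)·e₃ + t·u and f₂ = (b₁·m_L·g/L)·e₃ − t·u; i.e., the solutions of the load wrench equations are exactly the one-parameter family of Theorem 1. -/
open scoped RealInnerProductSpace

/-- Cross product on `EuclideanSpace ℝ (Fin 3)`. -/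
noncomputable def cross3 (a b : EuclideanSpace ℝ (Fin 3)) : EuclideanSpace ℝ (Fin 3) :=
  WithLp.toLp 2 ![a 1 * b 2 - a 2 * b 1, a 2 * b 0 - a 0 * b 2, a 0 * b 1 - a 1 * b 0]

/-- The vertical unit vector `e₃`. -/
noncomputable def e3 : EuclideanSpace ℝ (Fin 3) := WithLp.toLp 2 ![(0 : ℝ), 0, 1]

lemma cross_zero_scalar (u0 u1 u2 v0 v1 v2 : ℝ)
    (hu : u0 ≠ 0 ∨ u1 ≠ 0 ∨ u2 ≠ 0)
    (h0 : u1 * v2 - u2 * v1 = 0) (h1 : u2 * v0 - u0 * v2 = 0)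
    (h2 : u0 * v1 - u1 * v0 = 0) :
    ∃ t : ℝ, v0 = t * u0 ∧ v1 = t * u1 ∧ v2 = t * u2 := by
  rcases hu with h | h | h
  · refine ⟨v0 / u0, by field_simp, ?_, ?_⟩
    · field_simp; nlinarith [h2]
    · field_simp; nlinarith [h1]
  · refine ⟨v1 / u1, ?_, by field_simp, ?_⟩
    · field_simp; nlinarith [h2]
    · field_simp; nlinarith [h0]
  · refine ⟨v2 / u2, ?_, ?_, by field_simp⟩
    · field_simp; nlinarith [h1]
    · field_simp; nlinarith [h0]

/-- uniqueness part of Theorem 1: if the cable forces `f₁, f₂` satisfy the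
static load balance equations, then there is a unique internal-force intensity `t` such
that `f₁ = (b₂ m g / L) e₃ + t u` and `f₂ = (b₁ m g / L) e₃ - t u`. -/
theorem equilibrium_cable_forces_unique
    (mL g b₁ b₂ L : ℝ) (hm : 0 < mL) (hg : 0 < g) (hb₁ : 0 < b₁) (hb₂ : 0 < b₂)
    (hL : L = b₁ + b₂)
    (u : EuclideanSpace ℝ (Fin 3)) (hu : u ≠ 0)
    (f₁ f₂ : EuclideanSpace ℝ (Fin 3))
    (hforce : f₁ + f₂ = (mL * g) • e3)
    (htorque : b₁ • cross3 u f₁ - b₂ • cross3 u f₂ = 0) :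
    ∃! t : ℝ, f₁ = (b₂ * mL * g / L) • e3 + t • u ∧
              f₂ = (b₁ * mL * g / L) • e3 - t • u := by
  subst hL
  have hL0 : b₁ + b₂ ≠ 0 := by positivity
  have hf : ∀ i, f₂ i = mL * g * e3 i - f₁ i := by
    intro i
    have := congrArg (fun v => v i) hforce
    simp only [PiLp.add_apply, PiLp.smul_apply, smul_eq_mul] at this
    linarith
  have ht : ∀ i, b₁ * cross3 u f₁ i - b₂ * cross3 u f₂ i = 0 := by
    intro i
    have := congrArg (fun v => v i) htorque
    simpa [PiLp.sub_apply, PiLp.smul_apply, smul_eq_mul] using this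
  have e30 : e3 0 = 0 := rfl
  have e31 : e3 1 = 0 := rfl
  have e32 : e3 2 = (1 : ℝ) := rfl
  have ht0 := ht 0
  have ht1 := ht 1
  have ht2 := ht 2
  simp only [cross3, PiLp.toLp_apply, Matrix.cons_val_zero, Matrix.cons_val_one, Matrix.head_cons,
    Matrix.cons_val_two, Matrix.tail_cons, hf, e30, e31, e32] at ht0 ht1 ht2
  set c : ℝ := b₂ * mL * g / (b₁ + b₂) with hc
  have hcL : c * (b₁ + b₂) = b₂ * mL * g := by rw [hc]; field_simp
  have h0 : u 1 * (f₁ 2 - c) - u 2 * f₁ 1 = 0 := by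
    have hL' : (b₁ + b₂) * (u 1 * (f₁ 2 - c) - u 2 * f₁ 1) = 0 := by
      linear_combination ht0 - u 1 * hcL
    rcases mul_eq_zero.mp hL' with h | h
    · exact absurd h hL0
    · exact h
  have h1 : u 2 * f₁ 0 - u 0 * (f₁ 2 - c) = 0 := by
    have hL' : (b₁ + b₂) * (u 2 * f₁ 0 - u 0 * (f₁ 2 - c)) = 0 := by
      linear_combination ht1 + u 0 * hcL
    rcases mul_eq_zero.mp hL' with h | h
    · exact absurd h hL0
    · exact h
  have h2 : u 0 * f₁ 1 - u 1 * f₁ 0 = 0 := by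
    have hL' : (b₁ + b₂) * (u 0 * f₁ 1 - u 1 * f₁ 0) = 0 := by
      linear_combination ht2
    rcases mul_eq_zero.mp hL' with h | h
    · exact absurd h hL0
    · exact h
  have hune : u 0 ≠ 0 ∨ u 1 ≠ 0 ∨ u 2 ≠ 0 := by
    by_contra h
    push_neg at h
    apply hu
    ext i
    fin_cases i <;> simp [h.1, h.2.1, h.2.2]
  obtain ⟨t, hv0, hv1, hv2⟩ :=
    cross_zero_scalar (u 0) (u 1) (u 2) (f₁ 0) (f₁ 1) (f₁ 2 - c) hune h0 h1 h2
  have hb1c : mL * g - c = b₁ * mL * g / (b₁ + b₂) := by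
    rw [hc]; field_simp; ring
  refine ⟨t, ⟨?_, ?_⟩, ?_⟩
  · ext i
    fin_cases i <;>
      simp only [PiLp.add_apply, PiLp.smul_apply, smul_eq_mul]
    · show f₁ 0 = c * e3 0 + t * u 0
      rw [e30]; linarith [hv0]
    · show f₁ 1 = c * e3 1 + t * u 1
      rw [e31]; linarith [hv1]
    · show f₁ 2 = c * e3 2 + t * u 2
      rw [e32]; linarith [hv2]
  · ext i
    fin_cases i <;>
      simp only [PiLp.sub_apply, PiLp.smul_apply, smul_eq_mul]
    · show f₂ 0 = b₁ * mL * g / (b₁ + b₂) * e3 0 - t * u 0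
      rw [e30, hf 0, e30]; linarith [hv0]
    · show f₂ 1 = b₁ * mL * g / (b₁ + b₂) * e3 1 - t * u 1
      rw [e31, hf 1, e31]; linarith [hv1]
    · show f₂ 2 = b₁ * mL * g / (b₁ + b₂) * e3 2 - t * u 2
      rw [e32, hf 2, e32]; linarith [hv2, hb1c]
  · rintro s ⟨hs1, -⟩
    have hsc : ∀ i, f₁ i = c * e3 i + s * u i := by
      intro i
      have := congrArg (fun v => v i) hs1
      simpa [PiLp.add_apply, PiLp.smul_apply, smul_eq_mul] using this
    rcases hune with h | h | h
    · have h' : (s - t) * u 0 = 0 := by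
        have := hsc 0; rw [e30] at this
        linear_combination hv0 - this
      rcases mul_eq_zero.mp h' with h' | h'
      · linarith
      · exact absurd h' h
    · have h' : (s - t) * u 1 = 0 := by
        have := hsc 1; rw [e31] at this
        linear_combination hv1 - this
      rcases mul_eq_zero.mp h' with h' | h'
      · linarith
      · exact absurd h' h
    · have h' : (s - t) * u 2 = 0 := by
        have := hsc 2; rw [e32] at this
        linear_combination hv2 - this
      rcases mul_eq_zero.mp h' with h' | h'
      · linarith
      · exact absurd h' h
end

section
/- Global minimum of the cable elastic-energy term of the Lyapunov function (Theorem 3, proof): let k > 0, l₀ ≥ 0 and f ∈ ℝ³ with f ≠ 0, and define h : ℝ³ → ℝ by h(x) = (k/2)·(‖x‖ − l₀)² − ⟨x, f⟩. Then h(x) ≥ −‖f‖²/(2k) − l₀·‖f‖ for all x ∈ ℝ³, with equality if and only if x = (l₀ + ‖f‖/k)·f/‖f‖. That is, h attains a strict global minimum exactly at the equilibrium cable vector of Theorem 1. -/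
open scoped RealInnerProductSpace

/-- global minimum of the cable elastic-energy term of the Lyapunov
function: `h(x) = (k/2)(‖x‖ − l₀)² − ⟨x, f⟩` satisfies `h(x) ≥ −‖f‖²/(2k) − l₀ ‖f‖`,
with equality iff `x = (l₀ + ‖f‖/k) f/‖f‖`, the equilibrium cable vector of Theorem 1. -/
theorem cable_energy_global_min
    (k l₀ : ℝ) (hk : 0 < k) (hl₀ : 0 ≤ l₀)
    (f : EuclideanSpace ℝ (Fin 3)) (hf : f ≠ 0)
    (h : EuclideanSpace ℝ (Fin 3) → ℝ)
    (hh : ∀ x, h x = (k / 2) * (‖x‖ - l₀) ^ 2 - ⟪x, f⟫) :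
    ∀ x : EuclideanSpace ℝ (Fin 3),
      h x ≥ -‖f‖ ^ 2 / (2 * k) - l₀ * ‖f‖ ∧
      (h x = -‖f‖ ^ 2 / (2 * k) - l₀ * ‖f‖ ↔ x = (l₀ + ‖f‖ / k) • ‖f‖⁻¹ • f) := by
  intro x
  have hF : (0:ℝ) < ‖f‖ := norm_pos_iff.mpr hf
  have hCS : ⟪x, f⟫ ≤ ‖x‖ * ‖f‖ := real_inner_le_norm x f
  have hkey : h x - (-‖f‖ ^ 2 / (2 * k) - l₀ * ‖f‖) =
      (k / 2) * (‖x‖ - (l₀ + ‖f‖ / k)) ^ 2 + (‖x‖ * ‖f‖ - ⟪x, f⟫) := by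
    rw [hh]; field_simp; ring
  have hsq : 0 ≤ (k / 2) * (‖x‖ - (l₀ + ‖f‖ / k)) ^ 2 :=
    mul_nonneg (by linarith) (sq_nonneg _)
  constructor
  · linarith
  constructor
  · intro heq
    rw [heq] at hkey
    have h1 : ⟪x, f⟫ = ‖x‖ * ‖f‖ := by linarith
    have h2 : ‖x‖ = l₀ + ‖f‖ / k := by
      have : (‖x‖ - (l₀ + ‖f‖ / k)) ^ 2 = 0 := by
        have h2' : (k / 2) * (‖x‖ - (l₀ + ‖f‖ / k)) ^ 2 = 0 := by linarith
        have := sq_nonneg (‖x‖ - (l₀ + ‖f‖ / k))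
        nlinarith
      have := pow_eq_zero_iff (n := 2) (by norm_num) |>.mp this
      linarith
    have h3 : ‖f‖ • x = ‖x‖ • f := inner_eq_norm_mul_iff_real.mp h1
    have : x = (‖x‖ / ‖f‖) • f := by
      rw [div_eq_inv_mul, mul_smul]
      rw [eq_inv_smul_iff₀ hF.ne']
      exact h3
    rw [this, h2, smul_smul, div_eq_mul_inv]
  · intro hx
    have hc : (0:ℝ) ≤ l₀ + ‖f‖ / k := by positivity
    have hnorm : ‖x‖ = l₀ + ‖f‖ / k := by
      rw [hx, norm_smul, norm_smul, Real.norm_eq_abs, Real.norm_eq_abs,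
        abs_of_nonneg hc, abs_of_nonneg (inv_nonneg.mpr hF.le)]
      field_simp
    have hinner : ⟪x, f⟫ = (l₀ + ‖f‖ / k) * ‖f‖ := by
      rw [hx, real_inner_smul_left, real_inner_smul_left, real_inner_self_eq_norm_sq]
      field_simp
    rw [hh, hnorm, hinner]
    field_simp
    ring
end
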